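/- Let i, j be positive integers with greatest common divisor υ, and write i = υ·i', j = υ·j'. For any integer u, the number of pairs of positive integers (n, n') with i·n ≤ t, j·n' ≤ t and i·n − j·n' = υ·u differs from ⌊υ·t/(i·j)⌋ by at most a constant independent of t. -/

import Mathlib

/-- Number of pairs `(n, n')` of positive integers with `i*n ≤ t`, `j*n' ≤ t` and
`i*n - j*n' = υ*u`. -/
noncomputable def solCount (i j υ : ℕ) (u : ℤ) (t : ℝ) : ℕ :=
  ((Finset.Icc 1 ⌊t⌋₊ ×ˢ Finset.Icc 1 ⌊t⌋₊).filter
    (fun p : ℕ × ℕ => ((i * p.1 : ℕ) : ℝ) ≤ t ∧ ((j * p.2 : ℕ) : ℝ) ≤ t ∧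
      (i : ℤ) * p.1 - (j : ℤ) * p.2 = (υ : ℤ) * u)).card

set_option maxHeartbeats 2000000 in
theorem count_solutions_asymptotics (i j υ i' j' : ℕ) (u : ℤ)
    (hi : 0 < i) (hj : 0 < j) (hυ : υ = Nat.gcd i j)
    (hi' : i = υ * i') (hj' : j = υ * j') (hco : Nat.Coprime i' j') :
    ∃ C : ℝ, ∀ t : ℝ, 0 < t →
      |(solCount i j υ u t : ℝ) - (⌊(υ : ℝ) * t / (i * j)⌋ : ℤ)| ≤ C := by
  have hυ0 : 0 < υ := hυ ▸ Nat.gcd_pos_of_pos_left j hi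
  have hi'0 : 0 < i' := by
    rcases Nat.eq_zero_or_pos i' with h | h
    · rw [h, Nat.mul_zero] at hi'; omega
    · exact h
  have hj'0 : 0 < j' := by
    rcases Nat.eq_zero_or_pos j' with h | h
    · rw [h, Nat.mul_zero] at hj'; omega
    · exact h
  have hiR : (0 : ℝ) < i := by exact_mod_cast hi
  have hjR : (0 : ℝ) < j := by exact_mod_cast hj
  have hi'R : (0 : ℝ) < i' := by exact_mod_cast hi'0
  have hj'R : (0 : ℝ) < j' := by exact_mod_cast hj'0
  have hυR : (0 : ℝ) < υ := by exact_mod_cast hυ0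
  have hi'R1 : (1 : ℝ) ≤ i' := by exact_mod_cast hi'0
  have hj'R1 : (1 : ℝ) ≤ j' := by exact_mod_cast hj'0
  have hiZ : (i : ℤ) = υ * i' := by exact_mod_cast hi'
  have hjZ : (j : ℤ) = υ * j' := by exact_mod_cast hj'
  have hiRe : (i : ℝ) = υ * i' := by exact_mod_cast hi'
  have hjRe : (j : ℝ) = υ * j' := by exact_mod_cast hj'
  -- Bezout: particular solution to i' A - j' B = u
  have hcoZ : IsCoprime (i' : ℤ) (j' : ℤ) := Nat.isCoprime_iff_coprime.mpr hco
  obtain ⟨x, y, hxy⟩ := hcoZ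
  have hcoZ : IsCoprime (i' : ℤ) (j' : ℤ) := Nat.isCoprime_iff_coprime.mpr hco
  obtain ⟨A, B, hAB⟩ : ∃ A B : ℤ, (i' : ℤ) * A - (j' : ℤ) * B = u :=
    ⟨u * x, -(u * y), by linear_combination u * hxy⟩
  -- endpoints
  set K₁ : ℤ := max ⌈((1 : ℝ) - A) / j'⌉ ⌈((1 : ℝ) - B) / i'⌉ with hK₁def
  set K₂ : ℝ → ℤ := fun t => min ⌊(t - (i : ℝ) * A) / ((i : ℝ) * j')⌋
      ⌊(t - (j : ℝ) * B) / ((j : ℝ) * i')⌋ with hK₂def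
  -- key counting identity
  have key : ∀ t : ℝ, 0 < t →
      solCount i j υ u t = (K₂ t + 1 - K₁).toNat := by
    intro t ht
    have hinj : Set.InjOn (fun k : ℤ => ((A + j' * k).toNat, (B + i' * k).toNat))
        (Finset.Icc K₁ (K₂ t)) := by
      intro k₁ h₁ k₂ h₂ hfe
      rw [Finset.mem_coe, Finset.mem_Icc] at h₁ h₂
      have ha1 : (1 : ℤ) ≤ A + j' * k₁ := by
        have h1 := le_trans (le_max_left _ _) h₁.1
        rw [Int.ceil_le, div_le_iff₀ hj'R] at h1
        have : (1 : ℝ) ≤ A + (j' : ℝ) * k₁ := by push_cast; linarith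
        exact_mod_cast this
      have ha2 : (1 : ℤ) ≤ A + j' * k₂ := by
        have h1 := le_trans (le_max_left _ _) h₂.1
        rw [Int.ceil_le, div_le_iff₀ hj'R] at h1
        have : (1 : ℝ) ≤ A + (j' : ℝ) * k₂ := by push_cast; linarith
        exact_mod_cast this
      have h4 : (A + (j' : ℤ) * k₁).toNat = (A + (j' : ℤ) * k₂).toNat :=
        congrArg Prod.fst hfe
      have h5 : A + (j' : ℤ) * k₁ = A + (j' : ℤ) * k₂ := by
        rw [← Int.toNat_of_nonneg (by linarith : (0 : ℤ) ≤ A + (j' : ℤ) * k₁),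
          ← Int.toNat_of_nonneg (by linarith : (0 : ℤ) ≤ A + (j' : ℤ) * k₂), h4]
      have hj'Z : (j' : ℤ) ≠ 0 := by exact_mod_cast hj'0.ne'
      exact mul_left_cancel₀ hj'Z (by linarith : (j' : ℤ) * k₁ = (j' : ℤ) * k₂)
    have hset : ((Finset.Icc 1 ⌊t⌋₊ ×ˢ Finset.Icc 1 ⌊t⌋₊).filter
        (fun p : ℕ × ℕ => ((i * p.1 : ℕ) : ℝ) ≤ t ∧ ((j * p.2 : ℕ) : ℝ) ≤ t ∧
          (i : ℤ) * p.1 - (j : ℤ) * p.2 = (υ : ℤ) * u))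
        = (Finset.Icc K₁ (K₂ t)).image
            (fun k : ℤ => ((A + j' * k).toNat, (B + i' * k).toNat)) := by
      ext p
      simp only [Finset.mem_filter, Finset.mem_product, Finset.mem_Icc, Finset.mem_image]
      constructor
      · rintro ⟨⟨⟨hp1, -⟩, ⟨hp2, -⟩⟩, hit, hjt, heq⟩
        have heq' : (i' : ℤ) * p.1 - (j' : ℤ) * p.2 = u := by
          rw [hiZ, hjZ] at heq
          have h1 : (υ : ℤ) * ((i' : ℤ) * p.1 - (j' : ℤ) * p.2) = (υ : ℤ) * u := by
            linear_combination heq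
          have hυZ : (υ : ℤ) ≠ 0 := by exact_mod_cast hυ0.ne'
          exact mul_left_cancel₀ hυZ h1
        have e : (i' : ℤ) * ((p.1 : ℤ) - A) = (j' : ℤ) * ((p.2 : ℤ) - B) := by
          linear_combination heq' - hAB
        have hdvd : (j' : ℤ) ∣ (p.1 : ℤ) - A := by
          have hcoZ2 : IsCoprime (j' : ℤ) (i' : ℤ) :=
            (Nat.isCoprime_iff_coprime.mpr hco).symm
          exact hcoZ2.dvd_of_dvd_mul_left ⟨(p.2 : ℤ) - B, e⟩
        obtain ⟨k, hk⟩ := hdvd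
        have hp1A : (p.1 : ℤ) = A + j' * k := by linarith [hk]
        have hp2B : (p.2 : ℤ) = B + i' * k := by
          have h2 : (j' : ℤ) * ((p.2 : ℤ) - B) = (j' : ℤ) * ((i' : ℤ) * k) := by
            rw [← e, hk]; ring
          have hj'Z : (j' : ℤ) ≠ 0 := by exact_mod_cast hj'0.ne'
          have h3 := mul_left_cancel₀ hj'Z h2
          linarith
        have hp1R : ((p.1 : ℕ) : ℝ) = (A : ℝ) + j' * k := by exact_mod_cast hp1A
        have hp2R : ((p.2 : ℕ) : ℝ) = (B : ℝ) + i' * k := by exact_mod_cast hp2B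
        refine ⟨k, ⟨?_, ?_⟩, ?_⟩
        · apply max_le
          · rw [Int.ceil_le, div_le_iff₀ hj'R]
            have hone : (1 : ℝ) ≤ ((p.1 : ℕ) : ℝ) := by exact_mod_cast hp1
            rw [hp1R] at hone
            push_cast
            linarith
          · rw [Int.ceil_le, div_le_iff₀ hi'R]
            have hone : (1 : ℝ) ≤ ((p.2 : ℕ) : ℝ) := by exact_mod_cast hp2
            rw [hp2R] at hone
            push_cast
            linarith
        · apply le_min
          · rw [Int.le_floor, le_div_iff₀ (by positivity)]
            have h3 : ((i * p.1 : ℕ) : ℝ) = (i : ℝ) * ((A : ℝ) + j' * k) := by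
              push_cast [hp1R]
              ring
            rw [h3] at hit
            linarith [hit]
          · rw [Int.le_floor, le_div_iff₀ (by positivity)]
            have h3 : ((j * p.2 : ℕ) : ℝ) = (j : ℝ) * ((B : ℝ) + i' * k) := by
              push_cast [hp2R]
              ring
            rw [h3] at hjt
            linarith [hjt]
        · have e1 : (A + (j' : ℤ) * k).toNat = p.1 := by
            rw [← hp1A]; exact Int.toNat_natCast p.1
          have e2 : (B + (i' : ℤ) * k).toNat = p.2 := by
            rw [← hp2B]; exact Int.toNat_natCast p.2
          exact Prod.ext e1 e2
      · rintro ⟨k, hk, rfl⟩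
        obtain ⟨hkl, hku⟩ := hk
        have ha1 : (1 : ℤ) ≤ A + j' * k := by
          have h1 := le_trans (le_max_left _ _) hkl
          rw [Int.ceil_le, div_le_iff₀ hj'R] at h1
          have : (1 : ℝ) ≤ A + (j' : ℝ) * k := by push_cast; linarith
          exact_mod_cast this
        have hb1 : (1 : ℤ) ≤ B + i' * k := by
          have h1 := le_trans (le_max_right _ _) hkl
          rw [Int.ceil_le, div_le_iff₀ hi'R] at h1
          have : (1 : ℝ) ≤ B + (i' : ℝ) * k := by push_cast; linarith
          exact_mod_cast this
        have hn1 : ((A + (j' : ℤ) * k).toNat : ℤ) = A + j' * k := Int.toNat_of_nonneg (by omega)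
        have hn2 : ((B + (i' : ℤ) * k).toNat : ℤ) = B + i' * k := Int.toNat_of_nonneg (by omega)
        have hn1R : (((A + (j' : ℤ) * k).toNat : ℕ) : ℝ) = (A : ℝ) + j' * k := by
          exact_mod_cast hn1
        have hn2R : (((B + (i' : ℤ) * k).toNat : ℕ) : ℝ) = (B : ℝ) + i' * k := by
          exact_mod_cast hn2
        have hfloor1 := le_trans hku (min_le_left _ _)
        rw [Int.le_floor, le_div_iff₀ (by positivity)] at hfloor1
        have hfloor2 := le_trans hku (min_le_right _ _)
        rw [Int.le_floor, le_div_iff₀ (by positivity)] at hfloor2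
        have hitle : ((i * (A + (j' : ℤ) * k).toNat : ℕ) : ℝ) ≤ t := by
          rw [Nat.cast_mul, hn1R]
          linarith [hfloor1]
        have hjtle : ((j * (B + (i' : ℤ) * k).toNat : ℕ) : ℝ) ≤ t := by
          rw [Nat.cast_mul, hn2R]
          linarith [hfloor2]
        have ha1R : (1 : ℝ) ≤ (A : ℝ) + j' * k := by
          have : ((1 : ℤ) : ℝ) ≤ ((A + (j' : ℤ) * k : ℤ) : ℝ) := by exact_mod_cast ha1
          push_cast at this
          linarith
        have hb1R : (1 : ℝ) ≤ (B : ℝ) + i' * k := by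
          have : ((1 : ℤ) : ℝ) ≤ ((B + (i' : ℤ) * k : ℤ) : ℝ) := by exact_mod_cast hb1
          push_cast at this
          linarith
        refine ⟨⟨⟨?_, ?_⟩, ⟨?_, ?_⟩⟩, hitle, hjtle, ?_⟩
        · have h7 : (1 : ℤ) ≤ ((A + (j' : ℤ) * k).toNat : ℤ) := by rw [hn1]; exact ha1
          exact_mod_cast h7
        · apply Nat.le_floor
          rw [hn1R]
          have h1R : (1 : ℝ) ≤ i := by exact_mod_cast hi
          have hIT : (i : ℝ) * ((A : ℝ) + j' * k) ≤ t := by linarith [hfloor1]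
          have hmul : 1 * ((A : ℝ) + j' * k) ≤ (i : ℝ) * ((A : ℝ) + j' * k) :=
            mul_le_mul_of_nonneg_right h1R (by linarith)
          linarith [hIT, hmul]
        · have h7 : (1 : ℤ) ≤ ((B + (i' : ℤ) * k).toNat : ℤ) := by rw [hn2]; exact hb1
          exact_mod_cast h7
        · apply Nat.le_floor
          rw [hn2R]
          have h1R : (1 : ℝ) ≤ j := by exact_mod_cast hj
          have hJT : (j : ℝ) * ((B : ℝ) + i' * k) ≤ t := by linarith [hfloor2]
          have hmul : 1 * ((B : ℝ) + i' * k) ≤ (j : ℝ) * ((B : ℝ) + i' * k) :=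
            mul_le_mul_of_nonneg_right h1R (by linarith)
          linarith [hJT, hmul]
        · rw [hn1, hn2, hiZ, hjZ]
          linear_combination (υ : ℤ) * hAB
    unfold solCount
    rw [hset, Finset.card_image_of_injOn hinj, Int.card_Icc]
  -- the asymptotic estimate
  refine ⟨((|A| + |B| + |K₁| + 5 : ℤ) : ℝ), ?_⟩
  intro t ht
  have hx : (υ : ℝ) * t / ((i : ℝ) * j) = t / ((i : ℝ) * j') := by
    rw [hjRe]
    field_simp
  set F : ℤ := ⌊(υ : ℝ) * t / ((i : ℝ) * (j : ℝ))⌋ with hF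
  have hF1 : (F : ℝ) ≤ t / ((i : ℝ) * j') := by rw [hF, ← hx]; exact Int.floor_le _
  have hF2 : t / ((i : ℝ) * j') - 1 < (F : ℝ) := by
    rw [hF, ← hx]
    exact Int.sub_one_lt_floor _
  have hFnn : (0 : ℤ) ≤ F := by
    rw [hF]; apply Int.floor_nonneg.mpr; positivity
  have hq1 : (t - (i : ℝ) * A) / ((i : ℝ) * j') = t / ((i : ℝ) * j') - A / j' := by
    field_simp
  have hq2 : (t - (j : ℝ) * B) / ((j : ℝ) * i') = t / ((i : ℝ) * j') - B / i' := by
    rw [hiRe, hjRe]; field_simp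
  have hA2 : (A : ℝ) / j' ≤ |(A : ℝ)| := by
    rw [div_le_iff₀ hj'R]
    nlinarith [le_abs_self (A : ℝ), abs_nonneg (A : ℝ)]
  have hA3 : -|(A : ℝ)| ≤ (A : ℝ) / j' := by
    rw [le_div_iff₀ hj'R]
    nlinarith [neg_abs_le (A : ℝ), abs_nonneg (A : ℝ)]
  have hB2 : (B : ℝ) / i' ≤ |(B : ℝ)| := by
    rw [div_le_iff₀ hi'R]
    nlinarith [le_abs_self (B : ℝ), abs_nonneg (B : ℝ)]
  have hB3 : -|(B : ℝ)| ≤ (B : ℝ) / i' := by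
    rw [le_div_iff₀ hi'R]
    nlinarith [neg_abs_le (B : ℝ), abs_nonneg (B : ℝ)]
  have hK2a : ((K₂ t : ℤ) : ℝ) ≤ t / ((i : ℝ) * j') + |(A : ℝ)| := by
    have h0 : K₂ t ≤ ⌊(t - (i : ℝ) * A) / ((i : ℝ) * j')⌋ := min_le_left _ _
    have h1 : ((K₂ t : ℤ) : ℝ) ≤ ((⌊(t - (i : ℝ) * A) / ((i : ℝ) * j')⌋ : ℤ) : ℝ) :=
      Int.cast_le.mpr h0
    have h2 := Int.floor_le ((t - (i : ℝ) * A) / ((i : ℝ) * j'))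
    linarith [hq1]
  have hK2b : t / ((i : ℝ) * j') - |(A : ℝ)| - |(B : ℝ)| - 1 ≤ ((K₂ t : ℤ) : ℝ) := by
    have hb1 : t / ((i : ℝ) * j') - |(A : ℝ)| - |(B : ℝ)| - 1
        ≤ ((⌊(t - (i : ℝ) * A) / ((i : ℝ) * j')⌋ : ℤ) : ℝ) := by
      have h2 := Int.sub_one_lt_floor ((t - (i : ℝ) * A) / ((i : ℝ) * j'))
      have := abs_nonneg (B : ℝ)
      linarith [hq1]
    have hb2 : t / ((i : ℝ) * j') - |(A : ℝ)| - |(B : ℝ)| - 1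
        ≤ ((⌊(t - (j : ℝ) * B) / ((j : ℝ) * i')⌋ : ℤ) : ℝ) := by
      have h2 := Int.sub_one_lt_floor ((t - (j : ℝ) * B) / ((j : ℝ) * i'))
      have := abs_nonneg (A : ℝ)
      linarith [hq2]
    have hKeq : K₂ t = min ⌊(t - (i : ℝ) * A) / ((i : ℝ) * j')⌋
        ⌊(t - (j : ℝ) * B) / ((j : ℝ) * i')⌋ := rfl
    rcases min_cases ⌊(t - (i : ℝ) * A) / ((i : ℝ) * j')⌋
        ⌊(t - (j : ℝ) * B) / ((j : ℝ) * i')⌋ with h | h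
    · rw [hKeq, h.1]; exact hb1
    · rw [hKeq, h.1]; exact hb2
  have hk := key t ht
  have hK1a : (K₁ : ℝ) ≤ |(K₁ : ℝ)| := le_abs_self _
  have hK1b : -|(K₁ : ℝ)| ≤ (K₁ : ℝ) := neg_abs_le _
  have hsol : (solCount i j υ u t : ℝ) = ((K₂ t + 1 - K₁).toNat : ℝ) := by exact_mod_cast hk
  rw [hsol]
  rcases le_or_gt 0 (K₂ t + 1 - K₁) with hz0 | hz0
  · have hzt : (((K₂ t + 1 - K₁).toNat : ℕ) : ℝ) = ((K₂ t : ℤ) : ℝ) + 1 - (K₁ : ℝ) := by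
      have := Int.toNat_of_nonneg hz0
      have h5 : (((K₂ t + 1 - K₁).toNat : ℕ) : ℝ) = ((K₂ t + 1 - K₁ : ℤ) : ℝ) := by
        exact_mod_cast this
      rw [h5]
      push_cast
      ring
    rw [hzt, abs_le]
    constructor
    · push_cast
      linarith
    · push_cast
      linarith
  · have hzt : (K₂ t + 1 - K₁).toNat = 0 := by omega
    rw [hzt]
    have hFR : (0 : ℝ) ≤ (F : ℝ) := by exact_mod_cast hFnn
    have hzR : ((K₂ t : ℤ) : ℝ) + 1 - (K₁ : ℝ) ≤ 0 := by
      have h6 : ((K₂ t + 1 - K₁ : ℤ) : ℝ) ≤ 0 := by exact_mod_cast hz0.le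
      push_cast at h6
      linarith
    rw [Nat.cast_zero, zero_sub, abs_neg, abs_of_nonneg hFR]
    push_cast
    linarith
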